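/- Let p be a prime, ξ_p a primitive p-th root of unity, O = Z[ξ_p], A an ideal of O, and a ∈ A with a ∉ (ξ_p − 1)A. Let (A,a) denote the Z-module A ⊕ Z with the order-p automorphism φ·(x,k) = (ξ_p x + k a, k). Then (A,a) ⊗ F_p is isomorphic as an F_p[G]-module to N_p, the single unipotent Jordan block of size p. -/

import Mathlib

open scoped TensorProduct

/-- The unipotent Jordan block of size `q` over `𝔽ₚ`. -/
def jordanBlock (p q : ℕ) : Matrix (Fin q) (Fin q) (ZMod p) :=
  Matrix.of fun i j => if j = i then 1 else if (i : ℕ) + 1 = (j : ℕ) then 1 else 0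


open Polynomial in
theorem aux_dvd (p : ℕ) (hp : p.Prime) {O : Type} [CommRing O] [IsDomain O]
    (ζ : O) (hζ : IsPrimitiveRoot ζ p) :
    ((p:O) ∣ (1 - ζ)^(p-1)) ∧ ((1-ζ)^(p-1) ∣ (p:O)) := by
  classical
  have hpos : 0 < p := hp.pos
  have hrange : (Multiset.range p).toFinset = Finset.range p := by
    ext x; simp [Multiset.mem_toFinset]
  have him : nthRootsFinset p (1:O) = (Finset.range p).image (ζ ^ ·) := by
    rw [nthRootsFinset_def, hζ.nthRoots_eq (one_pow p), Multiset.toFinset_map, hrange]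
    simp [mul_one]
  have hpoly : (X ^ p - 1 : O[X]) = ∏ i ∈ Finset.range p, (X - C (ζ ^ i)) := by
    rw [X_pow_sub_one_eq_prod hpos hζ, him, Finset.prod_image]
    intro i hi j hj hij
    exact hζ.pow_inj (Finset.mem_range.mp hi) (Finset.mem_range.mp hj) hij
  have hcancel : (∑ i ∈ Finset.range p, (X : O[X]) ^ i)
      = ∏ i ∈ (Finset.range p).erase 0, (X - C (ζ ^ i)) := by
    have hx1 : (X - 1 : O[X]) ≠ 0 := by
      simpa using X_sub_C_ne_zero (1 : O)
    apply mul_right_cancel₀ hx1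
    rw [geom_sum_mul, hpoly, ← Finset.mul_prod_erase _ _ (Finset.mem_range.mpr hpos)]
    rw [pow_zero, map_one]
    ring
  have hprod : (p : O) = ∏ i ∈ (Finset.range p).erase 0, (1 - ζ ^ i) := by
    have := congrArg (Polynomial.eval 1) hcancel
    simpa [Polynomial.eval_prod, Polynomial.eval_finset_sum] using this
  have hcard : ((Finset.range p).erase 0).card = p - 1 := by
    rw [Finset.card_erase_of_mem (Finset.mem_range.mpr hpos), Finset.card_range]
  constructor
  · rw [hprod, ← hcard, ← Finset.prod_const]
    refine Finset.prod_dvd_prod_of_dvd _ _ (fun i hi => ?_)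
    obtain ⟨hi0, hip⟩ := Finset.mem_erase.mp hi
    have hip' := Finset.mem_range.mp hip
    have hcop : Nat.Coprime i p :=
      (hp.coprime_iff_not_dvd.mpr (Nat.not_dvd_of_pos_of_lt (Nat.pos_of_ne_zero hi0) hip')).symm
    obtain ⟨m, -, hm⟩ := Nat.exists_mul_mod_eq_one_of_coprime hcop hp.one_lt
    have hzm : (ζ ^ i) ^ m = ζ := by
      rw [← pow_mul]
      conv_lhs => rw [← Nat.div_add_mod (i*m) p]
      rw [pow_add, pow_mul, hζ.pow_eq_one, one_pow, one_mul, hm, pow_one]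
    calc (1 - ζ^i : O) ∣ 1^m - (ζ^i)^m := sub_dvd_pow_sub_pow _ _ m
    _ = 1 - ζ := by rw [one_pow, hzm]
  · rw [hprod, ← hcard, ← Finset.prod_const]
    refine Finset.prod_dvd_prod_of_dvd _ _ (fun i hi => ?_)
    simpa using sub_dvd_pow_sub_pow (1:O) ζ i

theorem aux_li {K V : Type*} [Field K] [AddCommGroup V] [Module K V]
    (f : Module.End K V) (v : V) (n : ℕ)
    (h0 : (f ^ (n-1)) v ≠ 0) (h1 : ∀ m, n ≤ m → (f ^ m) v = 0) :
    LinearIndependent K (fun i : Fin n => (f ^ (i:ℕ)) v) := by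
  rw [Fintype.linearIndependent_iff]
  intro g hg
  suffices h : ∀ k, ∀ i : Fin n, (i:ℕ) = k → g i = 0 by
    intro i; exact h i i rfl
  intro k
  induction k using Nat.strong_induction_on with
  | _ k ih =>
    intro i hi
    have hkn : k < n := hi ▸ i.isLt
    have happ := congrArg (f ^ (n - 1 - k)) hg
    rw [map_zero, map_sum] at happ
    have hsum : ∀ j : Fin n, (f ^ (n-1-k)) (g j • (f ^ (j:ℕ)) v)
        = g j • (f ^ (n-1-k+(j:ℕ))) v := by
      intro j; rw [map_smul, ← Module.End.mul_apply, ← pow_add]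
    rw [Finset.sum_congr rfl (fun j _ => hsum j)] at happ
    rw [Finset.sum_eq_single i] at happ
    · rw [hi, show n - 1 - k + k = n - 1 by omega] at happ
      rcases smul_eq_zero.mp happ with h | h
      · exact h
      · exact absurd h h0
    · intro j _ hj
      rcases lt_or_gt_of_ne (fun hc : (j:ℕ) = (i:ℕ) => hj (Fin.ext hc)) with hlt | hgt
      · rw [ih (j:ℕ) (by omega) j rfl, zero_smul]
      · rw [h1 _ (by omega), smul_zero]
    · intro hni; exact absurd (Finset.mem_univ i) hni

open Polynomial in
theorem aux_basisO (p : ℕ) (hp : p.Prime) (O : Type) [CommRing O] [IsDomain O] [CharZero O]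
    (ζ : O) (hζ : IsPrimitiveRoot ζ p) (hO : Algebra.adjoin ℤ {ζ} = ⊤) :
    Nonempty (Module.Basis (Fin (p-1)) ℤ O) := by
  have hpos := hp.pos
  have haev : Polynomial.aeval ζ (cyclotomic p ℤ) = 0 := by
    rw [Polynomial.aeval_def, ← Polynomial.eval_map, map_cyclotomic]
    exact hζ.isRoot_cyclotomic hpos
  let ψ : AdjoinRoot (cyclotomic p ℤ) →ₐ[ℤ] O := AdjoinRoot.liftAlgHom _ (Algebra.ofId ℤ O) ζ haev
  have hsurj : Function.Surjective ψ := by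
    have : Algebra.adjoin ℤ {ζ} ≤ ψ.range := by
      apply Algebra.adjoin_le
      intro x hx
      rw [Set.mem_singleton_iff] at hx
      refine ⟨AdjoinRoot.root _, ?_⟩
      show ψ _ = x
      rw [hx]
      exact AdjoinRoot.liftAlgHom_root _ (Algebra.ofId ℤ O) ζ haev
    intro y
    rw [hO] at this
    exact this Algebra.mem_top
  have hinj : Function.Injective ψ := by
    rw [injective_iff_map_eq_zero]
    intro x hx
    obtain ⟨f, rfl⟩ := AdjoinRoot.mk_surjective x
    replace hx : Polynomial.aeval ζ f = 0 := hx
    rw [AdjoinRoot.mk_eq_zero]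
    let K := FractionRing O
    have hinjOK : Function.Injective (algebraMap O K) := IsFractionRing.injective O K
    haveI : CharZero K := charZero_of_injective_algebraMap hinjOK
    have hζK : IsPrimitiveRoot (algebraMap O K ζ) p := hζ.map_of_injective hinjOK
    have hmin : cyclotomic p ℚ = minpoly ℚ (algebraMap O K ζ) :=
      cyclotomic_eq_minpoly_rat hζK hpos
    have hz : (Polynomial.aeval (algebraMap O K ζ)) (f.map (Int.castRingHom ℚ)) = 0 := by
      rw [Polynomial.aeval_def, Polynomial.eval₂_map,
        Subsingleton.elim ((algebraMap ℚ K).comp (Int.castRingHom ℚ)) (algebraMap ℤ K),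
        ← Polynomial.aeval_def, Polynomial.aeval_algebraMap_apply, hx, map_zero]
    have hdvd : cyclotomic p ℚ ∣ f.map (Int.castRingHom ℚ) := by
      rw [hmin]
      exact minpoly.dvd ℚ _ hz
    rw [← map_cyclotomic_int p ℚ] at hdvd
    exact (Polynomial.map_dvd_map (Int.castRingHom ℚ) Int.cast_injective
      (cyclotomic.monic p ℤ)).mp hdvd
  let pb := AdjoinRoot.powerBasis' (cyclotomic.monic p ℤ)
  let e0 := AlgEquiv.ofBijective ψ ⟨hinj, hsurj⟩
  have hdim : pb.dim = p - 1 := by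
    show (cyclotomic p ℤ).natDegree = p - 1
    rw [natDegree_cyclotomic, Nat.totient_prime hp]
  exact ⟨(pb.basis.map e0.toLinearEquiv).reindex (finCongr hdim)⟩


set_option maxHeartbeats 1000000 in
theorem tensor_Aa_isJordanBlock_p
    (p : ℕ) (hp : p.Prime)
    (O : Type) [CommRing O] [IsDomain O] [CharZero O]
    (ζ : O) (hζ : IsPrimitiveRoot ζ p) (hO : Algebra.adjoin ℤ {ζ} = ⊤)
    (A : Ideal O) (hA : A ≠ ⊥) (a : O) (haA : a ∈ A)
    (ha : ¬ ∃ y ∈ A, a = (ζ - 1) * y)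
    (φ : (A × ℤ) →ₗ[ℤ] (A × ℤ))
    (hφ : ∀ x : A × ℤ,
      ((φ x).1 : O) = ζ * (x.1 : O) + x.2 • a ∧ (φ x).2 = x.2) :
    ∃ e : (ZMod p ⊗[ℤ] (A × ℤ)) ≃ₗ[ZMod p] (Fin p → ZMod p),
      ∀ v, e (LinearMap.baseChange (ZMod p) φ v) = Matrix.toLin' (jordanBlock p p) (e v) := by
  classical
  haveI : Fact p.Prime := ⟨hp⟩
  have hp1 : 1 < p := hp.one_lt
  have hζ1 : ζ - 1 ≠ 0 := sub_ne_zero.mpr (hζ.ne_one hp1)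
  obtain ⟨hD1, hD2⟩ := aux_dvd p hp ζ hζ
  obtain ⟨u, hu⟩ := hD1
  obtain ⟨w, hw⟩ := hD2
  have hsign : ((ζ - 1 : O))^(p-1) = (-1)^(p-1) * (1 - ζ)^(p-1) := by
    rw [← neg_pow, neg_sub]
  have hF1 : (ζ-1)^(p-1) = (p:O) * ((-1)^(p-1) * u) := by rw [hsign, hu]; ring
  have hF2 : ∀ b : O, (ζ-1)^(p-2) * a = (p:O) * b →
      a = (ζ-1) * ((-1:O)^(p-1) * w * b) := by
    intro b hb
    have hsign' : (1 - ζ:O)^(p-1) = (-1)^(p-1) * (ζ-1)^(p-1) := by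
      rw [← neg_pow, neg_sub]
    have hpm : (p : O) = (-1)^(p-1) * ((ζ-1)^(p-2) * (ζ-1)) * w := by
      rw [hw, hsign', show (ζ-1:O)^(p-2)*(ζ-1) = (ζ-1)^(p-1) by
        rw [← pow_succ, show p-2+1 = p-1 by omega]]
    have hcalc : (ζ-1)^(p-2) * a = (ζ-1)^(p-2) * ((ζ-1) * ((-1:O)^(p-1) * w * b)) := by
      rw [hb, hpm]; ring
    exact mul_left_cancel₀ (pow_ne_zero _ hζ1) hcalc
  -- bases
  obtain ⟨bO⟩ := aux_basisO p hp O ζ hζ hO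
  haveI : Module.Finite ℤ O := Module.Finite.of_basis bO
  obtain ⟨n, bA⟩ := Submodule.basisOfPid bO (Submodule.restrictScalars ℤ A)
  haveI : Module.Finite ℤ ↥(Submodule.restrictScalars ℤ A) := Module.Finite.of_basis bA
  have hn : n = p - 1 := by
    have h1 : Module.finrank ℤ ↥(Submodule.restrictScalars ℤ A) = n :=
      (Module.finrank_eq_card_basis bA).trans (by simp)
    have h2 : Module.finrank ℤ O = p - 1 :=
      (Module.finrank_eq_card_basis bO).trans (by simp)
    have hle : n ≤ p - 1 := by
      have := Submodule.finrank_le (Submodule.restrictScalars ℤ A)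
      omega
    have hge : p - 1 ≤ n := by
      obtain ⟨x, hxA, hx0⟩ := (Submodule.ne_bot_iff A).mp hA
      let L : O →ₗ[ℤ] ↥(Submodule.restrictScalars ℤ A) :=
        { toFun := fun y => ⟨x * y, Ideal.mul_mem_right y A hxA⟩
          map_add' := fun y z => by ext; simp [mul_add]
          map_smul' := fun c y => by ext; simp [zsmul_eq_mul]; ring }
      have hLinj : Function.Injective L := by
        intro y z hyz
        have : x * y = x * z := congrArg Subtype.val hyz
        exact mul_left_cancel₀ hx0 this
      have := LinearMap.finrank_le_finrank_of_injective hLinj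
      omega
    omega
  let bA' : Module.Basis (Fin n) ℤ ↥A := bA
  let bM : Module.Basis ((Fin n) ⊕ Unit) ℤ (↥A × ℤ) := bA'.prod (Module.Basis.singleton Unit ℤ)
  let bV : Module.Basis ((Fin n) ⊕ Unit) (ZMod p) (ZMod p ⊗[ℤ] (↥A × ℤ)) := bM.baseChange (ZMod p)
  have hfinV : Module.finrank (ZMod p) (ZMod p ⊗[ℤ] (↥A × ℤ)) = p := by
    rw [Module.finrank_eq_card_basis bV]
    simp only [Fintype.card_sum, Fintype.card_fin, Fintype.card_unit, hn]
    omega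
  -- vanishing criterion
  have hzero : ∀ x : ↥A × ℤ, (1 : ZMod p) ⊗ₜ[ℤ] x = 0 → ∃ y : ↥A × ℤ, x = (p:ℤ) • y := by
    intro x hx
    have hcoef : ∀ i, ((bM.repr x i : ℤ) : ZMod p) = 0 := by
      intro i
      have := congrArg (fun v => bV.repr v i) hx
      simpa [bV, Module.Basis.baseChange_repr_tmul, zsmul_eq_mul] using this
    choose d hd using fun i => (ZMod.intCast_zmod_eq_zero_iff_dvd _ p).mp (hcoef i)
    refine ⟨∑ i, d i • bM i, ?_⟩
    calc x = ∑ i, bM.repr x i • bM i := (bM.sum_repr x).symm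
    _ = ∑ i, ((p:ℤ) * d i) • bM i := by
        refine Finset.sum_congr rfl (fun i _ => ?_)
        rw [hd i]
    _ = (p:ℤ) • ∑ i, d i • bM i := by
        rw [Finset.smul_sum]
        refine Finset.sum_congr rfl (fun i _ => ?_)
        rw [mul_smul]
  have hkill : ∀ y : ↥A × ℤ, (1 : ZMod p) ⊗ₜ[ℤ] ((p:ℤ) • y) = (0 : ZMod p ⊗[ℤ] (↥A × ℤ)) := by
    intro y
    rw [TensorProduct.tmul_smul, ← Int.cast_smul_eq_zsmul (ZMod p)]
    simp
  -- the nilpotent endomorphism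
  set Φ := LinearMap.baseChange (ZMod p) φ with hΦ
  let N : Module.End (ZMod p) (ZMod p ⊗[ℤ] (↥A × ℤ)) := Φ - LinearMap.id
  have hNapp : ∀ x, N x = Φ x - x := fun x => rfl
  have hNtmul : ∀ m : ↥A × ℤ, N ((1:ZMod p) ⊗ₜ[ℤ] m) = (1:ZMod p) ⊗ₜ[ℤ] (φ m - m) := by
    intro m
    rw [hNapp, hΦ, LinearMap.baseChange_tmul, ← TensorProduct.tmul_sub]
  let v0 : ZMod p ⊗[ℤ] (↥A × ℤ) := (1:ZMod p) ⊗ₜ[ℤ] ((0 : ↥A), (1:ℤ))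
  let wv : ℕ → ↥A × ℤ := fun k => (⟨(ζ-1)^k * a, Ideal.mul_mem_left A _ haA⟩, 0)
  have hc : ∀ k : ℕ, (N ^ (k+1)) v0 = (1:ZMod p) ⊗ₜ[ℤ] wv k := by
    intro k
    induction k with
    | zero =>
      rw [pow_one, hNtmul]
      congr 1
      obtain ⟨h1, h2⟩ := hφ ((0 : ↥A), (1:ℤ))
      refine Prod.ext (Subtype.ext ?_) ?_
      · show ((φ ((0 : ↥A), (1:ℤ))).1 : O) - ((0:↥A) : O) = (ζ-1)^0 * a
        rw [h1]; simp
      · show (φ ((0 : ↥A), (1:ℤ))).2 - 1 = 0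
        rw [h2]; simp
    | succ k ih =>
      rw [pow_succ', Module.End.mul_apply, ih, hNtmul]
      congr 1
      obtain ⟨h1, h2⟩ := hφ (wv k)
      refine Prod.ext (Subtype.ext ?_) ?_
      · show ((φ (wv k)).1 : O) - ((ζ-1)^k * a) = (ζ-1)^(k+1) * a
        rw [h1]
        show ζ * ((ζ-1)^k * a) + (0:ℤ) • a - (ζ-1)^k * a = (ζ-1)^(k+1) * a
        simp; ring
      · show (φ (wv k)).2 - (wv k).2 = 0
        rw [h2]; simp
  have hcp : ∀ m, p ≤ m → (N ^ m) v0 = 0 := by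
    have hcpp : (N ^ p) v0 = 0 := by
      have hp2 : p - 1 + 1 = p := by omega
      have hstep := hc (p-1)
      rw [hp2] at hstep
      rw [hstep]
      have hwv : wv (p-1) = (p:ℤ) •
          ((⟨(-1)^(p-1) * u * a, Ideal.mul_mem_left A _ haA⟩, 0) : ↥A × ℤ) := by
        refine Prod.ext (Subtype.ext ?_) (by simp [wv])
        show (ζ-1)^(p-1) * a = ((p:ℤ) • (⟨(-1)^(p-1) * u * a, _⟩ : ↥A) : ↥A).val
        rw [hF1]
        simp [zsmul_eq_mul]
        ring
      rw [hwv]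
      exact hkill _
    intro m hm
    have hsplit : N ^ m = N ^ (m - p) * N ^ p := by rw [← pow_add]; congr 1; omega
    rw [hsplit, Module.End.mul_apply, hcpp, map_zero]
  have hcne : (N ^ (p-1)) v0 ≠ 0 := by
    intro hz0
    have hp2 : p - 2 + 1 = p - 1 := by omega
    have hstep := hc (p-2)
    rw [hp2] at hstep
    rw [hstep] at hz0
    obtain ⟨y, hy⟩ := hzero (wv (p-2)) hz0
    have hy1 : ((wv (p-2)).1 : O) = (((p:ℤ) • y).1 : O) := by rw [hy]
    have hyO : (ζ-1)^(p-2) * a = (p:O) * (y.1 : O) := by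
      simpa [zsmul_eq_mul] using hy1
    exact ha ⟨(-1:O)^(p-1) * w * (y.1 : O),
      Ideal.mul_mem_left A _ y.1.2, hF2 _ hyO⟩
  -- basis from iterates
  have li0 : LinearIndependent (ZMod p) (fun i : Fin p => (N ^ (i:ℕ)) v0) :=
    aux_li N v0 p hcne hcp
  have li : LinearIndependent (ZMod p)
      ((fun i : Fin p => (N ^ (i:ℕ)) v0) ∘ Fin.rev) := li0.comp Fin.rev Fin.rev_injective
  let B := basisOfLinearIndependentOfCardEqFinrank li (by simpa using hfinV.symm)
  have hB : ∀ i : Fin p, B i = (N ^ (p - 1 - (i:ℕ))) v0 := by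
    intro i
    have hco : B i = (N ^ ((Fin.rev i : Fin p) : ℕ)) v0 := by
      rw [coe_basisOfLinearIndependentOfCardEqFinrank]
      rfl
    rw [hco, show ((Fin.rev i : Fin p) : ℕ) = p - 1 - (i:ℕ) from by
      rw [Fin.val_rev]; omega]
  refine ⟨B.equivFun, ?_⟩
  have key : ∀ i : Fin p, B.equivFun (Φ (B i)) =
      Matrix.toLin' (jordanBlock p p) (B.equivFun (B i)) := by
    intro i
    have hΦB : Φ (B i) = B i + N (B i) := by rw [hNapp]; abel
    have hNB : N (B i) = (N ^ (p - 1 - (i:ℕ) + 1)) v0 := by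
      rw [hB i, pow_succ', Module.End.mul_apply]
    funext r
    have hRHS : Matrix.toLin' (jordanBlock p p) (B.equivFun (B i)) r
        = jordanBlock p p r i := by
      rw [Matrix.toLin'_apply]
      show ∑ j, jordanBlock p p r j * B.equivFun (B i) j = _
      rw [Finset.sum_eq_single i]
      · rw [Module.Basis.equivFun_self]; simp
      · intro j _ hj
        rw [Module.Basis.equivFun_self]
        simp [hj.symm]
      · intro hni; exact absurd (Finset.mem_univ i) hni
    rw [hRHS, hΦB, map_add]
    by_cases hi0 : (i:ℕ) = 0
    · have hN0 : N (B i) = 0 := by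
        rw [hNB, show p - 1 - (i:ℕ) + 1 = p from by omega]
        exact hcp p le_rfl
      rw [hN0, map_zero]
      simp only [Pi.add_apply, Pi.zero_apply, add_zero, Module.Basis.equivFun_self]
      simp only [jordanBlock, Matrix.of_apply]
      by_cases h : i = r
      · simp [h]
      · rw [if_neg h, if_neg h, if_neg (by omega : ¬ ((r:ℕ)+1 = (i:ℕ)))]
    · have hi1 : 1 ≤ (i:ℕ) := by omega
      have hi'lt : (i:ℕ) - 1 < p := by omega
      have hN1 : N (B i) = B ⟨(i:ℕ) - 1, hi'lt⟩ := by
        rw [hNB, hB ⟨(i:ℕ) - 1, hi'lt⟩,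
          show p - 1 - (i:ℕ) + 1 = p - 1 - (((⟨(i:ℕ) - 1, hi'lt⟩ : Fin p)):ℕ) from by
            simp only []; omega]
      rw [hN1]
      simp only [Pi.add_apply, Module.Basis.equivFun_self]
      simp only [jordanBlock, Matrix.of_apply]
      by_cases h : i = r
      · have hir : ¬ ((⟨(i:ℕ) - 1, hi'lt⟩ : Fin p) = r) := by
          intro hc
          have hc' := congrArg Fin.val hc
          have h' := congrArg Fin.val h
          simp at hc' h'
          omega
        rw [if_pos h, if_neg hir, if_pos h]
        simp
      · rw [if_neg h, if_neg h, zero_add]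
        by_cases h2 : (r:ℕ)+1 = (i:ℕ)
        · rw [if_pos h2, if_pos (Fin.ext (by simp; omega))]
        · rw [if_neg h2, if_neg (fun hc => h2 (by
            have := congrArg Fin.val hc
            simp at this
            omega))]
  -- extend from basis to all vectors
  let L1 : (ZMod p ⊗[ℤ] (↥A × ℤ)) →ₗ[ZMod p] (Fin p → ZMod p) :=
    (B.equivFun.toLinearMap).comp Φ
  let L2 : (ZMod p ⊗[ℤ] (↥A × ℤ)) →ₗ[ZMod p] (Fin p → ZMod p) :=
    (Matrix.toLin' (jordanBlock p p)).comp B.equivFun.toLinearMap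
  have hL : L1 = L2 := B.ext fun i => key i
  intro v
  exact DFunLike.congr_fun hL v
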